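/- arXiv:2410.15249 — 3 statements merged into one kernel-verified Lean document; each statement's English description precedes it below -/
import Mathlib

section
/- With the same setup, the functional y ↦ ∫₀^{θ(y)} L⁺(y_t) dt is upper semicontinuous on the path space 𝒴 = {y : [0,∞)→ℝ^d : 1-Lipschitz, θ(y) := inf{t : y_t ∈ Γ} < ∞, y constant after θ}, equipped with the metric d(y,ŷ) = ‖y−ŷ‖_∞ + |θ(y)−θ(ŷ)|. That is, if y^n → y in this metric, then ∫₀^{θ(y)} L⁺(y_t)dt ≥ limsup_n ∫₀^{θ(y^n)} L⁺(y^n_t)dt. -/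
open Set Filter MeasureTheory
open scoped ENNReal NNReal

noncomputable section

/-- First hitting time (after time `0`) of the set `Γ` by the path `y`. -/
def hitTime {d : ℕ} (Γ : Set (EuclideanSpace ℝ (Fin d)))
    (y : ℝ → EuclideanSpace ℝ (Fin d)) : ℝ :=
  sInf {t : ℝ | 0 ≤ t ∧ y t ∈ Γ}

/-- Membership in the path space `𝒴`: 1-Lipschitz, hits `Γ` in finite time, and is
stopped at the hitting time. -/
def inPathSpace {d : ℕ} (Γ : Set (EuclideanSpace ℝ (Fin d)))
    (y : ℝ → EuclideanSpace ℝ (Fin d)) : Prop :=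
  LipschitzWith 1 y ∧ (∃ t : ℝ, 0 ≤ t ∧ y t ∈ Γ) ∧
    ∀ t : ℝ, hitTime Γ y ≤ t → y t = y (hitTime Γ y)

/-- `x ↦ max (f x) 0` is upper semicontinuous if `f` is. -/
lemma usc_max0 {E : Type*} [TopologicalSpace E] {f : E → ℝ}
    (hf : UpperSemicontinuous f) : UpperSemicontinuous (fun x => max (f x) 0) := by
  intro x c hc
  rw [max_lt_iff] at hc
  filter_upwards [hf x c hc.1] with z hz
  exact max_lt hz hc.2

/-- An usc function is bounded above on a compact set. -/
lemma usc_bddAbove {E : Type*} [TopologicalSpace E] {f : E → ℝ}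
    (hf : UpperSemicontinuous f) {K : Set E} (hK : IsCompact K) :
    ∃ M : ℝ, 0 ≤ M ∧ ∀ x ∈ K, f x ≤ M := by
  obtain ⟨s, hs⟩ := hK.elim_finite_subcover (fun m : ℕ => f ⁻¹' Iio (m : ℝ))
    (fun m => hf.isOpen_preimage _)
    (fun x _ => by
      obtain ⟨m, hm⟩ := exists_nat_gt (f x)
      exact mem_iUnion.2 ⟨m, hm⟩)
  refine ⟨(s.sup id : ℕ), Nat.cast_nonneg _, fun x hx => ?_⟩
  obtain ⟨m, hm, hlt⟩ := mem_iUnion₂.1 (hs hx)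
  exact hlt.le.trans (Nat.cast_le.2 (Finset.le_sup (f := id) hm))

lemma hitTime_nonneg' {d : ℕ} (Γ : Set (EuclideanSpace ℝ (Fin d)))
    (y : ℝ → EuclideanSpace ℝ (Fin d)) (h : ∃ t : ℝ, 0 ≤ t ∧ y t ∈ Γ) :
    0 ≤ hitTime Γ y :=
  le_csInf h fun _ ht => ht.1

lemma integral_Ioc_eq_toReal {c : ℝ} (hc : 0 ≤ c) {u : ℝ → ℝ} (hu : Measurable u)
    (h0 : ∀ t, 0 ≤ u t) :
    ∫ t in (0:ℝ)..c, u t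
      = (∫⁻ t, (Set.Ioc (0:ℝ) c).indicator (fun t => ENNReal.ofReal (u t)) t).toReal := by
  rw [intervalIntegral.integral_of_le hc,
    integral_eq_lintegral_of_nonneg_ae (ae_of_all _ h0) hu.aestronglyMeasurable,
    ← lintegral_indicator measurableSet_Ioc]

theorem stmt4 {d : ℕ} (Γ : Set (EuclideanSpace ℝ (Fin d)))
    (hΓne : Γ.Nonempty) (hΓcl : IsClosed Γ)
    (L : EuclideanSpace ℝ (Fin d) → ℝ)
    (hLusc : UpperSemicontinuous L)
    (y : ℕ → ℝ → EuclideanSpace ℝ (Fin d)) (ylim : ℝ → EuclideanSpace ℝ (Fin d))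
    (hy : ∀ n, inPathSpace Γ (y n)) (hylim : inPathSpace Γ ylim)
    (hunif : TendstoUniformly y ylim atTop)
    (hθ : Tendsto (fun n => hitTime Γ (y n)) atTop (nhds (hitTime Γ ylim))) :
    limsup (fun n => ∫ t in (0:ℝ)..hitTime Γ (y n), max (L (y n t)) 0) atTop
      ≤ ∫ t in (0:ℝ)..hitTime Γ ylim, max (L (ylim t)) 0 := by
  classical
  set θ := hitTime Γ ylim with hθdef
  set θn : ℕ → ℝ := fun n => hitTime Γ (y n) with hθndef
  have hθ0 : 0 ≤ θ := hitTime_nonneg' Γ ylim hylim.2.1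
  have hθn0 : ∀ n, 0 ≤ θn n := fun n => hitTime_nonneg' Γ (y n) (hy n).2.1
  set Lp : EuclideanSpace ℝ (Fin d) → ℝ := fun x => max (L x) 0 with hLpdef
  have hLp : UpperSemicontinuous Lp := usc_max0 hLusc
  have hLp0 : ∀ x, 0 ≤ Lp x := fun x => le_max_right _ _
  have hLpm : Measurable Lp := hLp.measurable
  set T : ℝ := θ + 1 with hTdef
  set K : Set (EuclideanSpace ℝ (Fin d)) := Metric.closedBall (ylim 0) (T + 1) with hKdef
  obtain ⟨M, hM0, hM⟩ := usc_bddAbove hLp (isCompact_closedBall (ylim 0) (T + 1))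
  -- membership in K
  have hylimK : ∀ t ∈ Set.Ioc (0:ℝ) θ, ylim t ∈ K := by
    intro t ht
    have := hylim.1.dist_le_mul t 0
    simp only [NNReal.coe_one, one_mul, sub_zero] at this
    have h1 : dist (ylim t) (ylim 0) ≤ t := by
      simpa [abs_of_nonneg ht.1.le] using this
    exact Metric.mem_closedBall.2 (h1.trans (by linarith [ht.2]))
  -- measurable pieces
  set f : ℕ → ℝ → ℝ≥0∞ := fun n t =>
    (Set.Ioc (0:ℝ) (θn n)).indicator (fun t => ENNReal.ofReal (Lp (y n t))) t with hfdef
  set g : ℝ → ℝ≥0∞ :=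
    (Set.Ioc (0:ℝ) T).indicator (fun _ => ENNReal.ofReal M) with hgdef
  set f' : ℕ → ℝ → ℝ≥0∞ := fun n t => min (f n t) (g t) with hf'def
  set h : ℝ → ℝ≥0∞ :=
    (Set.Ioc (0:ℝ) θ).indicator (fun t => ENNReal.ofReal (Lp (ylim t))) with hhdef
  have hfm : ∀ n, Measurable (f n) := by
    intro n
    exact (ENNReal.measurable_ofReal.comp (hLpm.comp (hy n).1.continuous.measurable)).indicator
      measurableSet_Ioc
  have hgm : Measurable g := measurable_const.indicator measurableSet_Ioc
  have hf'm : ∀ n, Measurable (f' n) := fun n => (hfm n).min hgm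
  have hgint : ∫⁻ t, g t = ENNReal.ofReal M * ENNReal.ofReal T := by
    rw [hgdef, lintegral_indicator measurableSet_Ioc, setLIntegral_const,
      Real.volume_Ioc, sub_zero]
  have hgfin : ∫⁻ t, g t ≠ ⊤ := by
    rw [hgint]; exact ENNReal.mul_ne_top ENNReal.ofReal_ne_top ENNReal.ofReal_ne_top
  -- h ≤ g
  have hhg : ∀ t, h t ≤ g t := by
    intro t
    by_cases ht : t ∈ Set.Ioc (0:ℝ) θ
    · have ht' : t ∈ Set.Ioc (0:ℝ) T := ⟨ht.1, ht.2.trans (by simp [hTdef])⟩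
      rw [hhdef, hgdef, Set.indicator_of_mem ht, Set.indicator_of_mem ht']
      exact ENNReal.ofReal_le_ofReal (hM _ (hylimK t ht))
    · rw [hhdef, Set.indicator_of_notMem ht]; exact zero_le
  have hhfin : ∫⁻ t, h t ≠ ⊤ :=
    ne_top_of_le_ne_top hgfin (lintegral_mono hhg)
  -- eventually f n ≤ g pointwise
  have hev : ∀ᶠ n in atTop, ∀ t, f n t ≤ g t := by
    have h1 : ∀ᶠ n in atTop, θn n < T := hθ.eventually_lt_const (by simp [hTdef])
    have h2 : ∀ᶠ n in atTop, ∀ t, dist (ylim t) (y n t) < 1 :=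
      (Metric.tendstoUniformly_iff.1 hunif) 1 one_pos
    filter_upwards [h1, h2] with n hn1 hn2 t
    by_cases ht : t ∈ Set.Ioc (0:ℝ) (θn n)
    · have ht' : t ∈ Set.Ioc (0:ℝ) T := ⟨ht.1, ht.2.trans hn1.le⟩
      rw [hfdef, hgdef]
      simp only [Set.indicator_of_mem ht, Set.indicator_of_mem ht']
      refine ENNReal.ofReal_le_ofReal (hM _ ?_)
      have hd1 : dist (y n t) (ylim t) < 1 := by rw [dist_comm]; exact hn2 t
      have hd2 : dist (ylim t) (ylim 0) ≤ t := by
        have := hylim.1.dist_le_mul t 0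
        simp only [NNReal.coe_one, one_mul, sub_zero] at this
        simpa [abs_of_nonneg ht.1.le] using this
      refine Metric.mem_closedBall.2 ?_
      calc dist (y n t) (ylim 0) ≤ dist (y n t) (ylim t) + dist (ylim t) (ylim 0) :=
            dist_triangle _ _ _
        _ ≤ 1 + t := by linarith
        _ ≤ T + 1 := by have := ht.2.trans hn1.le; linarith
    · rw [hfdef]; simp only [Set.indicator_of_notMem ht]; exact zero_le
  -- pointwise limsup bound, away from t = θ
  have hpt : ∀ t : ℝ, t ≠ θ → limsup (fun n => f' n t) atTop ≤ h t := by
    intro t htθ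
    have hle : limsup (fun n => f' n t) atTop ≤ limsup (fun n => f n t) atTop :=
      limsup_le_limsup (Eventually.of_forall fun n => min_le_left _ _)
    refine hle.trans ?_
    rcases le_or_gt t 0 with ht0 | ht0
    · have : ∀ n, f n t = 0 := by
        intro n
        rw [hfdef]
        exact Set.indicator_of_notMem (fun hmem => absurd hmem.1 (not_lt.2 ht0)) _
      simp only [this]
      simp
    rcases lt_or_gt_of_ne htθ with htlt | htgt
    · -- 0 < t < θ
      have hmem : t ∈ Set.Ioc (0:ℝ) θ := ⟨ht0, htlt.le⟩
      rw [hhdef, Set.indicator_of_mem hmem]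
      have hevn : ∀ᶠ n in atTop, f n t = ENNReal.ofReal (Lp (y n t)) := by
        filter_upwards [hθ.eventually_const_lt htlt] with n hn
        exact Set.indicator_of_mem (show t ∈ Set.Ioc (0:ℝ) (θn n) from ⟨ht0, hn.le⟩) _
      rw [limsup_congr hevn]
      refine ENNReal.le_of_forall_pos_le_add fun ε hε _ => ?_
      have husc := hLp (ylim t) (Lp (ylim t) + ε) (by
        have : (0:ℝ) < ε := hε
        linarith)
      have htend : Tendsto (fun n => y n t) atTop (nhds (ylim t)) :=
        hunif.tendsto_at t
      have hev2 : ∀ᶠ n in atTop, Lp (y n t) < Lp (ylim t) + ε := htend.eventually husc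
      refine limsup_le_of_le (by isBoundedDefault) ?_
      filter_upwards [hev2] with n hn
      calc ENNReal.ofReal (Lp (y n t)) ≤ ENNReal.ofReal (Lp (ylim t) + ε) :=
            ENNReal.ofReal_le_ofReal hn.le
        _ = ENNReal.ofReal (Lp (ylim t)) + ENNReal.ofReal ε :=
            ENNReal.ofReal_add (hLp0 _) ε.coe_nonneg
        _ = ENNReal.ofReal (Lp (ylim t)) + ε := by rw [ENNReal.ofReal_coe_nnreal]
    · -- t > θ
      have hevn : ∀ᶠ n in atTop, f n t = 0 := by
        filter_upwards [hθ.eventually_lt_const htgt] with n hn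
        exact Set.indicator_of_notMem (fun hmem => absurd hmem.2 (not_le.2 hn)) _
      rw [limsup_congr hevn]
      simp
  -- main chain in ℝ≥0∞
  have hchain : limsup (fun n => ∫⁻ t, f n t) atTop ≤ ∫⁻ t, h t := by
    have heq : (fun n => ∫⁻ t, f n t) =ᶠ[atTop] fun n => ∫⁻ t, f' n t := by
      filter_upwards [hev] with n hn
      exact (lintegral_congr fun t => (min_eq_left (hn t)).symm)
    rw [limsup_congr heq]
    calc limsup (fun n => ∫⁻ t, f' n t) atTop
        ≤ ∫⁻ t, limsup (fun n => f' n t) atTop :=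
          limsup_lintegral_le g hf'm (fun n => ae_of_all _ fun t => min_le_right _ _) hgfin
      _ ≤ ∫⁻ t, h t := by
          refine lintegral_mono_ae ?_
          have : ∀ᵐ t : ℝ, t ≠ θ := by
            rw [ae_iff]
            simpa using measure_singleton θ
          filter_upwards [this] with t ht using hpt t ht
  -- convert to real statement
  have hA : ∫ t in (0:ℝ)..θ, max (L (ylim t)) 0 = (∫⁻ t, h t).toReal := by
    exact integral_Ioc_eq_toReal hθ0 (hLpm.comp hylim.1.continuous.measurable) (fun t => hLp0 _)
  have han : ∀ n, ∫ t in (0:ℝ)..θn n, max (L (y n t)) 0 = (∫⁻ t, f n t).toReal := by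
    intro n
    exact integral_Ioc_eq_toReal (hθn0 n) (hLpm.comp (hy n).1.continuous.measurable)
      (fun t => hLp0 _)
  rw [hA]
  refine le_of_forall_pos_le_add fun ε hε => ?_
  have hlt : limsup (fun n => ∫⁻ t, f n t) atTop < (∫⁻ t, h t) + ENNReal.ofReal ε :=
    lt_of_le_of_lt hchain
      (ENNReal.lt_add_right hhfin (ENNReal.ofReal_pos.2 hε).ne')
  have hev3 : ∀ᶠ n in atTop,
      (∫ t in (0:ℝ)..θn n, max (L (y n t)) 0) ≤ (∫⁻ t, h t).toReal + ε := by
    filter_upwards [eventually_lt_of_limsup_lt hlt] with n hn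
    rw [han n]
    calc (∫⁻ t, f n t).toReal ≤ ((∫⁻ t, h t) + ENNReal.ofReal ε).toReal := by
          refine ENNReal.toReal_mono ?_ hn.le
          exact ENNReal.add_ne_top.2 ⟨hhfin, ENNReal.ofReal_ne_top⟩
      _ = (∫⁻ t, h t).toReal + ε := by
          rw [ENNReal.toReal_add hhfin ENNReal.ofReal_ne_top, ENNReal.toReal_ofReal hε.le]
  have hnonneg : ∀ n, (0:ℝ) ≤ ∫ t in (0:ℝ)..θn n, max (L (y n t)) 0 := fun n =>
    intervalIntegral.integral_nonneg (hθn0 n) (fun t _ => hLp0 _)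
  exact limsup_le_of_le (isCoboundedUnder_le_of_le atTop hnonneg) hev3
end
end

section
/- Let d ≥ 2, 0 < R₀, γ > 0, V₀ ≥ 0, and u : [R₀,∞) → ℝ continuous. Define F(r) := (γ+V₀)R₀^{d−1} − ∫_{R₀}^r (1+u(z)) z^{d−1} dz − γ r^{d−1} and, on the interval where F > 0, set w(x) := ∫_{R₀}^{|x|} r^{d−1} / F(r) dr for |x| > R₀. Then the radial function w ∈ C¹ on {R₀ < |x| < R*}, where R* is the first zero of F after R₀, ∇w(x) = (|x|^{d−1}/F(|x|)) · x/|x|, and w satisfies div(∇w/|∇w|² + γ ∇w/|∇w|) = −(u(|x|)+1) pointwise on {R₀ < |x| < R*}. -/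
open Set Filter MeasureTheory intervalIntegral

noncomputable section

section aux
variable {E : Type*} [NormedAddCommGroup E] [InnerProductSpace ℝ E]

local notation "⟪" x ", " y "⟫" => @inner ℝ _ _ x y

lemma my_hasFDerivAt_norm {x : E} (hx : x ≠ 0) :
    HasFDerivAt (fun y : E => ‖y‖) (‖x‖⁻¹ • (innerSL ℝ x : E →L[ℝ] ℝ)) x := by
  have hD : HasFDerivAt (fun y : E => ⟪y, y⟫)
      ((fderivInnerCLM ℝ (x, x)).comp ((ContinuousLinearMap.id ℝ E).prod
        (ContinuousLinearMap.id ℝ E))) x :=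
    (hasFDerivAt_id x).inner ℝ (hasFDerivAt_id x)
  have hnx : (0:ℝ) < ‖x‖ := norm_pos_iff.2 hx
  have hxx : ⟪x, x⟫ = ‖x‖ ^ 2 := real_inner_self_eq_norm_sq x
  have hsq : Real.sqrt ⟪x, x⟫ = ‖x‖ := by rw [hxx, Real.sqrt_sq (norm_nonneg x)]
  have hs : HasDerivAt Real.sqrt (1 / (2 * ‖x‖)) ⟪x, x⟫ := by
    have h := Real.hasDerivAt_sqrt (x := ⟪x, x⟫) (by rw [hxx]; positivity)
    rwa [hsq] at h
  have hcomp := HasDerivAt.comp_hasFDerivAt (f := fun y : E => ⟪y, y⟫) x hs hD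
  have heq : (Real.sqrt ∘ fun y : E => ⟪y, y⟫) = fun y : E => ‖y‖ := by
    funext y
    simp only [Function.comp_apply, real_inner_self_eq_norm_sq, Real.sqrt_sq (norm_nonneg y)]
  rw [heq] at hcomp
  refine (hcomp.congr_fderiv ?_).congr_fderiv rfl
  ext v
  simp only [ContinuousLinearMap.smul_apply, innerSL_apply_apply, ContinuousLinearMap.coe_comp',
    Function.comp_apply, ContinuousLinearMap.prod_apply, ContinuousLinearMap.id_apply,
    fderivInnerCLM_apply, smul_eq_mul]
  rw [real_inner_comm v x]
  field_simp
  ring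

end aux

/-- Divergence of a vector field on Euclidean space, computed coordinatewise. -/
def divg {d : ℕ} (F : EuclideanSpace ℝ (Fin d) → EuclideanSpace ℝ (Fin d))
    (x : EuclideanSpace ℝ (Fin d)) : ℝ :=
  ∑ i, (fderiv ℝ F x (EuclideanSpace.single i 1)) i

theorem stmt11 (d : ℕ) (hd : 2 ≤ d) (R₀ γ V₀ : ℝ) (hR : 0 < R₀) (hγ : 0 < γ) (hV : 0 ≤ V₀)
    (u : ℝ → ℝ) (hu : Continuous u)
    (F : ℝ → ℝ)
    (hF : ∀ r, F r = (γ + V₀) * R₀ ^ (d - 1)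
      - (∫ z in R₀..r, (1 + u z) * z ^ (d - 1)) - γ * r ^ (d - 1))
    (Rstar : ℝ) (hRs : R₀ < Rstar)
    (hFpos : ∀ r, R₀ ≤ r → r < Rstar → 0 < F r)
    (w : EuclideanSpace ℝ (Fin d) → ℝ)
    (hw : ∀ x, w x = ∫ r in R₀..‖x‖, r ^ (d - 1) / F r) :
    ContDiffOn ℝ 1 w {x | R₀ < ‖x‖ ∧ ‖x‖ < Rstar} ∧
    (∀ x : EuclideanSpace ℝ (Fin d), R₀ < ‖x‖ → ‖x‖ < Rstar →
      gradient w x = ((‖x‖ ^ (d - 1) / F ‖x‖) / ‖x‖) • x) ∧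
    (∀ x : EuclideanSpace ℝ (Fin d), R₀ < ‖x‖ → ‖x‖ < Rstar →
      divg (fun y => (‖gradient w y‖ ^ 2)⁻¹ • gradient w y
          + (γ / ‖gradient w y‖) • gradient w y) x = -(u ‖x‖ + 1)) := by
  -- basic continuity facts
  have hcont1 : Continuous (fun z : ℝ => (1 + u z) * z ^ (d - 1)) := by continuity
  have hFc : Continuous F := by
    have : F = fun r => (γ + V₀) * R₀ ^ (d - 1)
        - (∫ z in R₀..r, (1 + u z) * z ^ (d - 1)) - γ * r ^ (d - 1) := funext hF
    rw [this]
    exact ((continuous_const.sub (intervalIntegral.continuous_primitive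
      (fun a b => hcont1.intervalIntegrable a b) R₀)).sub
      (continuous_const.mul (continuous_pow _)))
  set φ : ℝ → ℝ := fun r => r ^ (d - 1) / F r with hφ
  set G : ℝ → ℝ := fun t => ∫ r in R₀..t, φ r with hG
  have hw' : w = fun y : EuclideanSpace ℝ (Fin d) => G ‖y‖ := funext fun y => hw y
  have hφU : ContinuousOn φ (Ioo R₀ Rstar) :=
    ((continuous_pow _).continuousOn.div hFc.continuousOn
      (fun r hr => (hFpos r hr.1.le hr.2).ne'))
  have hφI : ∀ t, R₀ < t → t < Rstar → IntervalIntegrable φ volume R₀ t := by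
    intro t ht1 ht2
    apply ContinuousOn.intervalIntegrable
    rw [uIcc_of_le ht1.le]
    exact ((continuous_pow _).continuousOn.div hFc.continuousOn
      (fun r hr => (hFpos r hr.1 (lt_of_le_of_lt hr.2 ht2)).ne'))
  have hGd : ∀ t ∈ Ioo R₀ Rstar, HasDerivAt G (φ t) t := by
    intro t ht
    exact intervalIntegral.integral_hasDerivAt_right (hφI t ht.1 ht.2)
      (hφU.stronglyMeasurableAtFilter isOpen_Ioo t ht)
      (hφU.continuousAt (isOpen_Ioo.mem_nhds ht))
  have hφpos : ∀ t ∈ Ioo R₀ Rstar, 0 < φ t := by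
    intro t ht
    exact div_pos (pow_pos (hR.trans ht.1) _) (hFpos t ht.1.le ht.2)
  -- the set is open
  have hSopen : IsOpen {x : EuclideanSpace ℝ (Fin d) | R₀ < ‖x‖ ∧ ‖x‖ < Rstar} := by
    have : {x : EuclideanSpace ℝ (Fin d) | R₀ < ‖x‖ ∧ ‖x‖ < Rstar} = (fun x : EuclideanSpace ℝ (Fin d) => ‖x‖) ⁻¹' (Ioo R₀ Rstar) := rfl
    rw [this]
    exact (isOpen_Ioo).preimage continuous_norm
  -- gradient formula
  have hgrad : ∀ x : EuclideanSpace ℝ (Fin d), R₀ < ‖x‖ → ‖x‖ < Rstar →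
      HasGradientAt w ((φ ‖x‖ / ‖x‖) • x) x := by
    intro x hx1 hx2
    have hx0 : x ≠ 0 := by
      intro h; rw [h, norm_zero] at hx1; exact absurd (hR.trans hx1) (lt_irrefl 0)
    have hnx : (0:ℝ) < ‖x‖ := hR.trans hx1
    have hnorm := my_hasFDerivAt_norm hx0
    have hcomp := HasDerivAt.comp_hasFDerivAt (f := fun y : EuclideanSpace ℝ (Fin d) => ‖y‖) x
      (hGd ‖x‖ ⟨hx1, hx2⟩) hnorm
    rw [hasGradientAt_iff_hasFDerivAt]
    have heqCLM : (InnerProductSpace.toDual ℝ (EuclideanSpace ℝ (Fin d))) ((φ ‖x‖ / ‖x‖) • x)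
        = φ ‖x‖ • (‖x‖⁻¹ • (innerSL ℝ x : EuclideanSpace ℝ (Fin d) →L[ℝ] ℝ)) := by
      ext v
      simp only [InnerProductSpace.toDual_apply_apply, real_inner_smul_left,
        ContinuousLinearMap.smul_apply, innerSL_apply_apply, smul_eq_mul]
      ring
    rw [heqCLM, hw']
    exact hcomp
  have hgradeq : ∀ x : EuclideanSpace ℝ (Fin d), R₀ < ‖x‖ → ‖x‖ < Rstar →
      gradient w x = ((‖x‖ ^ (d - 1) / F ‖x‖) / ‖x‖) • x := by
    intro x hx1 hx2
    exact (hgrad x hx1 hx2).gradient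
  refine ⟨?_, hgradeq, ?_⟩
  · -- C¹
    have hGC1 : ContDiffOn ℝ 1 G (Ioo R₀ Rstar) := by
      rw [show (1 : WithTop ℕ∞) = 0 + 1 from (zero_add 1).symm,
        contDiffOn_succ_iff_deriv_of_isOpen isOpen_Ioo]
      refine ⟨fun t ht => (hGd t ht).differentiableAt.differentiableWithinAt, by simp, ?_⟩
      rw [contDiffOn_zero]
      exact hφU.congr fun t ht => (hGd t ht).deriv
    intro x hx
    obtain ⟨hx1, hx2⟩ := hx
    have hx0 : x ≠ 0 := by
      intro h; rw [h, norm_zero] at hx1; exact absurd (hR.trans hx1) (lt_irrefl 0)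
    rw [hw']
    exact ((hGC1.contDiffAt (isOpen_Ioo.mem_nhds ⟨hx1, hx2⟩)).comp x
      (contDiffAt_norm ℝ hx0)).contDiffWithinAt
  · -- divergence
    intro x hx1 hx2
    have hx0 : x ≠ 0 := by
      intro h; rw [h, norm_zero] at hx1; exact absurd (hR.trans hx1) (lt_irrefl 0)
    have hnx : (0:ℝ) < ‖x‖ := hR.trans hx1
    set N : ℝ → ℝ := fun s => F s + γ * s ^ (d - 1) with hN
    set h : ℝ → ℝ := fun s => N s / s ^ d with hhdef
    -- the vector field coincides with y ↦ h ‖y‖ • y on the open set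
    have hfield : ∀ y : EuclideanSpace ℝ (Fin d), R₀ < ‖y‖ → ‖y‖ < Rstar →
        (‖gradient w y‖ ^ 2)⁻¹ • gradient w y + (γ / ‖gradient w y‖) • gradient w y
          = h ‖y‖ • y := by
      intro y hy1 hy2
      have hny : (0:ℝ) < ‖y‖ := hR.trans hy1
      have hFy : 0 < F ‖y‖ := hFpos _ hy1.le hy2
      rw [hgradeq y hy1 hy2]
      have hnormg : ‖((‖y‖ ^ (d - 1) / F ‖y‖) / ‖y‖) • y‖ = ‖y‖ ^ (d - 1) / F ‖y‖ := by
        rw [norm_smul, Real.norm_eq_abs, abs_of_nonneg (by positivity)]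
        field_simp
      rw [hnormg, smul_smul, smul_smul, ← add_smul]
      congr 1
      have hpow : ‖y‖ ^ (d - 1) * ‖y‖ = ‖y‖ ^ d := by
        rw [← pow_succ]; congr 1; omega
      simp only [hhdef, hN]
      rw [← hpow]
      have hA : (0:ℝ) < ‖y‖ ^ (d - 1) := by positivity
      field_simp
    -- derivative of h
    have hΦ' : HasDerivAt (fun t => ∫ z in R₀..t, (1 + u z) * z ^ (d - 1))
        ((1 + u ‖x‖) * ‖x‖ ^ (d - 1)) ‖x‖ :=
      intervalIntegral.integral_hasDerivAt_right (hcont1.intervalIntegrable _ _)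
        (hcont1.stronglyMeasurable.stronglyMeasurableAtFilter) hcont1.continuousAt
    have hNeq : N = fun s => (γ + V₀) * R₀ ^ (d - 1)
        - ∫ z in R₀..s, (1 + u z) * z ^ (d - 1) := by
      funext s
      simp only [hN]; rw [hF s]; ring
    have hNd : HasDerivAt N (-((1 + u ‖x‖) * ‖x‖ ^ (d - 1))) ‖x‖ := by
      rw [hNeq]
      simpa using hΦ'.const_sub ((γ + V₀) * R₀ ^ (d - 1))
    have hrd0 : (‖x‖ : ℝ) ^ d ≠ 0 := by positivity
    have hhd : HasDerivAt h
        ((-((1 + u ‖x‖) * ‖x‖ ^ (d - 1)) * ‖x‖ ^ d - N ‖x‖ * ((d:ℝ) * ‖x‖ ^ (d - 1)))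
          / (‖x‖ ^ d) ^ 2) ‖x‖ := by
      rw [hhdef]
      exact hNd.div (hasDerivAt_pow d ‖x‖) hrd0
    set h' : ℝ := (-((1 + u ‖x‖) * ‖x‖ ^ (d - 1)) * ‖x‖ ^ d
        - N ‖x‖ * ((d:ℝ) * ‖x‖ ^ (d - 1))) / (‖x‖ ^ d) ^ 2 with hh'
    have hnorm := my_hasFDerivAt_norm hx0
    have hhx := HasDerivAt.comp_hasFDerivAt (f := fun y : EuclideanSpace ℝ (Fin d) => ‖y‖)
      x hhd hnorm
    have hprod := hhx.smul (hasFDerivAt_id x)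
    have hEv : (fun y => (‖gradient w y‖ ^ 2)⁻¹ • gradient w y
        + (γ / ‖gradient w y‖) • gradient w y)
        =ᶠ[nhds x] (fun y : EuclideanSpace ℝ (Fin d) => h ‖y‖ • y) := by
      filter_upwards [hSopen.mem_nhds ⟨hx1, hx2⟩] with y hy using hfield y hy.1 hy.2
    have hfd : fderiv ℝ (fun y => (‖gradient w y‖ ^ 2)⁻¹ • gradient w y
        + (γ / ‖gradient w y‖) • gradient w y) x
        = h ‖x‖ • ContinuousLinearMap.id ℝ (EuclideanSpace ℝ (Fin d))
          + (h' • (‖x‖⁻¹ • (innerSL ℝ) x)).smulRight x := by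
      rw [hEv.fderiv_eq]
      exact hprod.fderiv
    rw [divg, hfd]
    have happ : ∀ i : Fin d,
        ((h ‖x‖ • ContinuousLinearMap.id ℝ (EuclideanSpace ℝ (Fin d))
          + (h' • (‖x‖⁻¹ • (innerSL ℝ) x)).smulRight x) (EuclideanSpace.single i 1)) i
        = h ‖x‖ + h' * ‖x‖⁻¹ * (x i * x i) := by
      intro i
      simp only [ContinuousLinearMap.add_apply, ContinuousLinearMap.smul_apply,
        ContinuousLinearMap.smulRight_apply, ContinuousLinearMap.id_apply,
        innerSL_apply_apply, PiLp.add_apply, PiLp.smul_apply, smul_eq_mul]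
      rw [EuclideanSpace.inner_single_right]
      simp [EuclideanSpace.single_apply]
      ring
    rw [Finset.sum_congr rfl fun i _ => happ i]
    rw [Finset.sum_add_distrib, Finset.sum_const, Finset.card_univ, Fintype.card_fin]
    have hsum2 : ∑ i, x i * x i = ‖x‖ ^ 2 := by
      rw [← real_inner_self_eq_norm_sq x]
      simp only [PiLp.inner_apply, RCLike.inner_apply, conj_trivial]
    rw [← Finset.mul_sum, hsum2]
    -- final scalar identity
    have hpow : ‖x‖ ^ (d - 1) * ‖x‖ = ‖x‖ ^ d := by
      rw [← pow_succ]; congr 1; omega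
    simp only [hh', hhdef, nsmul_eq_mul]
    rw [← hpow]
    have hA : (0:ℝ) < ‖x‖ ^ (d - 1) := by positivity
    field_simp
    ring
end
end

section
/- Let f : ℝ^d → ℝ be locally Lipschitz, α ∈ ℝ^d a unit vector, and suppose g : ℝ^d → [0,∞) is upper semicontinuous with f(x + tα) ≤ f(x) + ∫₀^t g(x + zα) dz for all x in an open set U and t ≥ 0 small enough that the segment stays in U. Then |∂_α f(x)| ≤ g(x) for Lebesgue-a.e. x ∈ U (whenever the directional derivative exists), and consequently |∇f| ≤ g Lebesgue-a.e. on U. -/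
open Set Filter MeasureTheory intervalIntegral

noncomputable section

/-- The key pointwise estimate: the one-sided directional derivative bound. -/
theorem stmt16_key {d : ℕ} (f : EuclideanSpace ℝ (Fin d) → ℝ)
    (g : EuclideanSpace ℝ (Fin d) → ℝ) (hg : UpperSemicontinuous g) (hg0 : ∀ x, 0 ≤ g x)
    (U : Set (EuclideanSpace ℝ (Fin d))) (hU : IsOpen U)
    (hbound : ∀ α : EuclideanSpace ℝ (Fin d), ‖α‖ = 1 → ∀ x ∈ U, ∀ t : ℝ, 0 ≤ t →
      (∀ s ∈ Set.Icc (0:ℝ) t, x + s • α ∈ U) →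
      f (x + t • α) ≤ f x + ∫ z in (0:ℝ)..t, g (x + z • α))
    (α : EuclideanSpace ℝ (Fin d)) (hα : ‖α‖ = 1) (x : EuclideanSpace ℝ (Fin d))
    (hxU : x ∈ U) (hfx : DifferentiableAt ℝ f x) : fderiv ℝ f x α ≤ g x := by
  refine le_of_forall_pos_le_add ?_
  intro ε hε
  obtain ⟨δ1, hδ1pos, hball⟩ := Metric.isOpen_iff.1 hU x hxU
  have husc : ∀ᶠ y in nhds x, g y < g x + ε := hg x (g x + ε) (by linarith [hg0 x])
  obtain ⟨δ2, hδ2pos, hδ2⟩ := Metric.eventually_nhds_iff.1 husc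
  set δ := min δ1 δ2 with hδ
  have hδpos : 0 < δ := lt_min hδ1pos hδ2pos
  -- derivative of t ↦ f (x + t • α) at 0
  have hline : HasDerivAt (fun t : ℝ => x + t • α) α 0 := by
    simpa using ((hasDerivAt_id (0:ℝ)).smul_const α).const_add x
  have hφ : HasDerivAt (fun t : ℝ => f (x + t • α)) (fderiv ℝ f x α) 0 := by
    have h1 : HasFDerivAt f (fderiv ℝ f x) ((fun t : ℝ => x + t • α) 0) := by
      simpa using hfx.hasFDerivAt
    exact h1.comp_hasDerivAt 0 hline
  have htend : Tendsto (slope (fun t : ℝ => f (x + t • α)) 0) (nhdsWithin 0 (Set.Ioi 0))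
      (nhds (fderiv ℝ f x α)) := by
    refine (hasDerivAt_iff_tendsto_slope.1 hφ).mono_left (nhdsWithin_mono _ ?_)
    intro t ht
    exact ne_of_gt ht
  refine le_of_tendsto htend ?_
  filter_upwards [Ioo_mem_nhdsGT_of_mem (Set.left_mem_Ico.2 hδpos)] with t ht
  obtain ⟨ht0, htδ⟩ := ht
  -- the segment stays in U
  have hseg : ∀ s ∈ Set.Icc (0:ℝ) t, x + s • α ∈ U := by
    intro s hs
    apply hball
    have : dist (x + s • α) x = |s| := by
      simp [dist_eq_norm, norm_smul, hα]
    rw [Metric.mem_ball, this, abs_of_nonneg hs.1]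
    exact lt_of_le_of_lt hs.2 (lt_of_lt_of_le htδ (min_le_left _ _))
  have hfb := hbound α hα x hxU t ht0.le hseg
  -- bound the integral
  have hint : (∫ z in (0:ℝ)..t, g (x + z • α)) ≤ t * (g x + ε) := by
    by_cases hI : IntervalIntegrable (fun z => g (x + z • α)) volume 0 t
    · have hmono : ∀ z ∈ Set.Icc (0:ℝ) t, g (x + z • α) ≤ g x + ε := by
        intro z hz
        refine (hδ2 ?_).le
        have : dist (x + z • α) x = |z| := by
          simp [dist_eq_norm, norm_smul, hα]
        rw [this, abs_of_nonneg hz.1]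
        exact lt_of_le_of_lt hz.2 (lt_of_lt_of_le htδ (min_le_right _ _))
      calc (∫ z in (0:ℝ)..t, g (x + z • α)) ≤ ∫ _ in (0:ℝ)..t, (g x + ε) :=
            intervalIntegral.integral_mono_on ht0.le hI intervalIntegrable_const hmono
        _ = t * (g x + ε) := by simp; ring
    · rw [intervalIntegral.integral_undef hI]
      exact mul_nonneg ht0.le (by linarith [hg0 x])
  -- conclude on the slope
  have hslope : slope (fun t : ℝ => f (x + t • α)) 0 t ≤ g x + ε := by
    rw [slope_def_field, sub_zero, div_le_iff₀ ht0]
    have h0 : f (x + (0:ℝ) • α) = f x := by simp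
    simp only [zero_smul, add_zero] at h0 ⊢
    nlinarith [hfb, hint]
  simpa using hslope

theorem stmt16_abs {d : ℕ} (f : EuclideanSpace ℝ (Fin d) → ℝ)
    (g : EuclideanSpace ℝ (Fin d) → ℝ) (hg : UpperSemicontinuous g) (hg0 : ∀ x, 0 ≤ g x)
    (U : Set (EuclideanSpace ℝ (Fin d))) (hU : IsOpen U)
    (hbound : ∀ α : EuclideanSpace ℝ (Fin d), ‖α‖ = 1 → ∀ x ∈ U, ∀ t : ℝ, 0 ≤ t →
      (∀ s ∈ Set.Icc (0:ℝ) t, x + s • α ∈ U) →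
      f (x + t • α) ≤ f x + ∫ z in (0:ℝ)..t, g (x + z • α))
    (α : EuclideanSpace ℝ (Fin d)) (hα : ‖α‖ = 1) (x : EuclideanSpace ℝ (Fin d))
    (hxU : x ∈ U) (hfx : DifferentiableAt ℝ f x) : |fderiv ℝ f x α| ≤ g x := by
  rw [abs_le]
  constructor
  · have h := stmt16_key f g hg hg0 U hU hbound (-α) (by simpa using hα) x hxU hfx
    rw [map_neg] at h
    linarith
  · exact stmt16_key f g hg hg0 U hU hbound α hα x hxU hfx

theorem stmt16 {d : ℕ} (f : EuclideanSpace ℝ (Fin d) → ℝ) (hf : LocallyLipschitz f)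
    (g : EuclideanSpace ℝ (Fin d) → ℝ) (hg : UpperSemicontinuous g) (hg0 : ∀ x, 0 ≤ g x)
    (U : Set (EuclideanSpace ℝ (Fin d))) (hU : IsOpen U)
    (hbound : ∀ α : EuclideanSpace ℝ (Fin d), ‖α‖ = 1 → ∀ x ∈ U, ∀ t : ℝ, 0 ≤ t →
      (∀ s ∈ Set.Icc (0:ℝ) t, x + s • α ∈ U) →
      f (x + t • α) ≤ f x + ∫ z in (0:ℝ)..t, g (x + z • α)) :
    (∀ α : EuclideanSpace ℝ (Fin d), ‖α‖ = 1 →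
      ∀ᵐ x ∂(volume.restrict U), DifferentiableAt ℝ f x → |fderiv ℝ f x α| ≤ g x) ∧
    ∀ᵐ x ∂(volume.restrict U), DifferentiableAt ℝ f x → ‖gradient f x‖ ≤ g x := by
  constructor
  · intro α hα
    filter_upwards [ae_restrict_mem hU.measurableSet] with x hxU hfx
    exact stmt16_abs f g hg hg0 U hU hbound α hα x hxU hfx
  · filter_upwards [ae_restrict_mem hU.measurableSet] with x hxU hfx
    rcases eq_or_ne (gradient f x) 0 with h0 | h0
    · rw [h0, norm_zero]; exact hg0 x
    · set v := gradient f x with hv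
      set α := ‖v‖⁻¹ • v with hαdef
      have hvnorm : ‖v‖ ≠ 0 := norm_ne_zero_iff.2 h0
      have hα : ‖α‖ = 1 := by
        rw [hαdef, norm_smul, norm_inv, norm_norm, inv_mul_cancel₀ hvnorm]
      have hinner : ∀ y, fderiv ℝ f x y = inner ℝ v y := by
        intro y
        rw [hv, gradient]
        rw [← InnerProductSpace.toDual_symm_apply]
      have hfα : fderiv ℝ f x α = ‖v‖ := by
        rw [hinner, hαdef, inner_smul_right, real_inner_self_eq_norm_sq]
        field_simp
      have := stmt16_key f g hg hg0 U hU hbound α hα x hxU hfx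
      rw [hfα] at this
      exact this
end
end
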